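/- arXiv:1401.5150 — 3 statements merged into one kernel-verified Lean document; each statement's English description precedes it below -/
import Mathlib

section
/- Define F_1 = P^+ D^{-1} L_k, where D^{-1} v(s) = ∫_{-1}^s v and P^+ is the degree-k left Gauss–Radau projection on [-1,1]. Then F_1 = -(L_k + L_{k-1})/(2k+1), and consequently F_1(-1) = 0 and ‖F_1‖_{L^∞([-1,1])} ≤ 2/(2k+1). -/
open Polynomial

/-- Legendre polynomial of degree `m` on `[-1,1]`, normalized so `L_m(1) = 1`. -/
noncomputable def leg (m : ℕ) : Polynomial ℝ :=
  Polynomial.C (((2 : ℝ) ^ m * Nat.factorial m)⁻¹) *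
    (fun p => Polynomial.derivative p)^[m] ((Polynomial.X ^ 2 - 1) ^ m)

/-- The antiderivative operator `D⁻¹ v (s) = ∫_{-1}^s v`. -/
noncomputable def Dinv (v : ℝ → ℝ) (s : ℝ) : ℝ := ∫ t in (-1 : ℝ)..s, v t

/-- Degree-`k` left Gauss–Radau projection on `[-1,1]`. -/
def IsRadauPos (k : ℕ) (v : ℝ → ℝ) (p : Polynomial ℝ) : Prop :=
  p.natDegree ≤ k ∧
  (∀ w : Polynomial ℝ, w.natDegree + 1 ≤ k →
    ∫ s in (-1 : ℝ)..1, (v s - p.eval s) * w.eval s = 0) ∧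
  p.eval (-1) = v (-1)

set_option maxRecDepth 8000

namespace LegAux2

noncomputable def u : Polynomial ℝ := X ^ 2 - 1

lemma L0 (n : ℕ) : derivative (u ^ (n + 1)) = C (2 * ((n : ℝ) + 1)) * (X * u ^ n) := by
  rw [derivative_pow]
  have hdu : derivative u = C 2 * X := by
    unfold u
    simp [derivative_X_pow]
    rw [← C_1, ← C_add]; norm_num
  rw [hdu]
  push_cast
  simp only [Nat.add_sub_cancel, map_mul, map_add, map_one, map_ofNat]
  ring

lemma LX (n : ℕ) (q : Polynomial ℝ) :
    derivative^[n + 1] (X * q) =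
      X * derivative^[n + 1] q + C ((n : ℝ) + 1) * derivative^[n] q := by
  induction n with
  | zero =>
    show derivative (X * q) = X * derivative q + _ * q
    rw [derivative_mul, derivative_X]
    push_cast
    simp only [map_add, map_zero, map_one]
    ring
  | succ n ih =>
    rw [Function.iterate_succ_apply', ih]
    simp only [derivative_add, derivative_mul, derivative_X, derivative_C, one_mul, zero_mul,
      zero_add, ← Function.iterate_succ_apply' derivative]
    push_cast
    simp only [map_add, map_one]
    ring

lemma LU (n : ℕ) (q : Polynomial ℝ) :
    derivative^[n + 2] (u * q) =
      u * derivative^[n + 2] q + C (2 * ((n : ℝ) + 2)) * (X * derivative^[n + 1] q)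
        + C (((n : ℝ) + 2) * ((n : ℝ) + 1)) * derivative^[n] q := by
  induction n with
  | zero =>
    show derivative (derivative (u * q)) = u * derivative (derivative q) + _ * (X * derivative q) + _ * q
    have hdu : derivative u = C 2 * X := by unfold u; simp [derivative_X_pow]; rw [← C_1, ← C_add]; norm_num
    simp only [derivative_mul, hdu, derivative_add, derivative_X, derivative_C]
    push_cast
    simp only [map_mul, map_add, map_one, map_ofNat, map_zero, Nat.cast_zero]
    ring
  | succ n ih =>
    rw [Function.iterate_succ_apply', ih]
    have hdu : derivative u = C 2 * X := by unfold u; simp [derivative_X_pow]; rw [← C_1, ← C_add]; norm_num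
    simp only [derivative_add, derivative_mul, hdu, derivative_X, derivative_C, one_mul, zero_mul,
      zero_add, ← Function.iterate_succ_apply' derivative]
    push_cast
    simp only [map_mul, map_add, map_one, map_ofNat]
    ring



noncomputable def cc (m : ℕ) : ℝ := ((2 : ℝ) ^ m * Nat.factorial m)⁻¹

noncomputable def leg' (m : ℕ) : Polynomial ℝ := C (cc m) * derivative^[m] (u ^ m)

lemma cc_pos (m : ℕ) : 0 < cc m := by unfold cc; positivity

lemma cc_succ (m : ℕ) : cc (m + 1) * (2 * ((m : ℝ) + 1)) = cc m := by
  unfold cc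
  rw [pow_succ, Nat.factorial_succ]
  push_cast
  have h1 : (2:ℝ)^m ≠ 0 := by positivity
  have h2 : ((Nat.factorial m : ℝ)) ≠ 0 := by positivity
  field_simp

lemma C_cc_succ (m : ℕ) : C (cc (m + 1)) * C (2 * ((m : ℝ) + 1)) = C (cc m) := by
  rw [← map_mul, cc_succ]

lemma deriv_iter (n : ℕ) (p : Polynomial ℝ) :
    derivative (derivative^[n] p) = derivative^[n] (derivative p) :=
  (Function.iterate_succ_apply' derivative n p).symm.trans (Function.iterate_succ_apply derivative n p)

lemma iter_succ' (n : ℕ) (p : Polynomial ℝ) :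
    derivative^[n + 1] p = derivative^[n] (derivative p) :=
  Function.iterate_succ_apply derivative n p

lemma P1 (n : ℕ) :
    u * derivative^[n + 2] (u ^ (n + 1)) =
      C (((n : ℝ) + 2) * ((n : ℝ) + 1)) * derivative^[n] (u ^ (n + 1)) := by
  have h1 := LU n (u ^ (n + 1))
  have h2 : u * u ^ (n + 1) = u ^ (n + 2) := by ring
  have h3 : derivative^[n + 2] (u ^ (n + 2)) =
      C (2 * ((n : ℝ) + 2)) * (X * derivative^[n + 1] (u ^ (n + 1))
        + C ((n : ℝ) + 1) * derivative^[n] (u ^ (n + 1))) := by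
    rw [show n + 2 = (n + 1) + 1 from rfl, iter_succ' (n + 1),
      show ((n:ℕ) + 1 + 1) = n + 2 from rfl, L0 (n + 1), iterate_derivative_C_mul, LX]
    push_cast
    ring
  rw [h2, h3] at h1
  linear_combination (norm := (simp only [map_mul, map_add, map_sub, map_ofNat, map_one]; ring1)) -h1

lemma legd (m : ℕ) : derivative (leg' m) = C (cc m) * derivative^[m + 1] (u ^ m) := by
  rw [leg', derivative_C_mul, ← Function.iterate_succ_apply' derivative]

lemma legdd (m : ℕ) : derivative (derivative (leg' m)) = C (cc m) * derivative^[m + 2] (u ^ m) := by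
  rw [legd, derivative_C_mul, ← Function.iterate_succ_apply' derivative]

lemma R1 (m : ℕ) :
    derivative (leg' (m + 1)) = X * derivative (leg' m) + C ((m : ℝ) + 1) * leg' m := by
  rw [legd, legd, leg']
  rw [show m + 1 + 1 = (m + 1) + 1 from rfl, iter_succ' (m + 1), L0 m,
    iterate_derivative_C_mul, LX]
  linear_combination (norm := (simp only [map_mul, map_add, map_sub, map_ofNat, map_one]; ring1)) (X * derivative^[m + 1] (u ^ m) + C ((m:ℝ) + 1) * derivative^[m] (u ^ m)) * C_cc_succ m

lemma R3 (n : ℕ) :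
    derivative (leg' (n + 1)) =
      X * derivative (leg' (n + 2)) - C ((n : ℝ) + 2) * leg' (n + 2) := by
  rw [legd, legd, leg']
  have hD3 : derivative^[n + 2 + 1] (u ^ (n + 2)) =
      C (2 * ((n : ℝ) + 2)) * (X * derivative^[n + 2] (u ^ (n + 1))
        + C ((n : ℝ) + 2) * derivative^[n + 1] (u ^ (n + 1))) := by
    rw [iter_succ' (n + 2), L0 (n + 1), iterate_derivative_C_mul,
      show n + 2 = (n + 1) + 1 from rfl, LX (n + 1)]
    push_cast
    ring
  have hD2 : derivative^[n + 2] (u ^ (n + 2)) =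
      C (2 * ((n : ℝ) + 2)) * (X * derivative^[n + 1] (u ^ (n + 1))
        + C ((n : ℝ) + 1) * derivative^[n] (u ^ (n + 1))) := by
    rw [show n + 2 = (n + 1) + 1 from rfl, iter_succ' (n + 1), L0 (n + 1),
      iterate_derivative_C_mul, LX n]
    push_cast
    ring
  rw [hD3, hD2]
  have hP := P1 n
  have hX2 : (X : Polynomial ℝ) ^ 2 = u + 1 := by unfold u; ring
  have hC := C_cc_succ (n + 1)
  push_cast at hC
  rw [show n + 1 + 1 = n + 2 from rfl] at hC
  rw [show n + 2 + 1 = n + 3 from rfl, show n + 1 + 1 = n + 2 from rfl] at *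
  linear_combination (norm := (simp only [map_mul, map_add, map_sub, map_ofNat, map_one]; ring1)) (- (X * (X * derivative^[n + 2] (u ^ (n + 1)) + C ((n:ℝ) + 2) * derivative^[n + 1] (u ^ (n + 1)))
      - C ((n:ℝ) + 2) * (X * derivative^[n + 1] (u ^ (n + 1)) + C ((n:ℝ) + 1) * derivative^[n] (u ^ (n + 1))))) * hC
    - C (cc (n + 1)) * hP - C (cc (n + 1)) * derivative^[n + 2] (u ^ (n + 1)) * hX2

lemma ODE (n : ℕ) :
    u * derivative (derivative (leg' (n + 1))) + C 2 * (X * derivative (leg' (n + 1)))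
      = C (((n : ℝ) + 1) * ((n : ℝ) + 2)) * leg' (n + 1) := by
  rw [legdd, legd, leg']
  have h1 := LU n (derivative (u ^ (n + 1)))
  have e1 : ∀ j : ℕ, derivative^[j] (derivative (u ^ (n + 1))) = derivative^[j + 1] (u ^ (n + 1)) :=
    fun j => (iter_succ' j _).symm
  rw [e1, e1, e1] at h1
  have h2 : u * derivative (u ^ (n + 1)) = C (2 * ((n : ℝ) + 1)) * (X * u ^ (n + 1)) := by
    rw [L0 n]
    have : u * u ^ n = u ^ (n + 1) := by ring
    linear_combination C (2 * ((n:ℝ) + 1)) * X * this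
  have h3 : derivative^[n + 2] (u * derivative (u ^ (n + 1)))
      = C (2 * ((n : ℝ) + 1)) * (X * derivative^[n + 2] (u ^ (n + 1))
          + C ((n : ℝ) + 2) * derivative^[n + 1] (u ^ (n + 1))) := by
    rw [h2, iterate_derivative_C_mul, show n + 2 = (n + 1) + 1 from rfl, LX (n + 1)]
    push_cast
    ring
  rw [h3] at h1
  rw [show n + 1 + 2 = n + 2 + 1 from rfl] at *
  linear_combination (norm := (simp only [map_mul, map_add, map_sub, map_ofNat, map_one]; ring1)) (- C (cc (n + 1))) * h1

lemma leg'_zero : leg' 0 = 1 := by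
  unfold leg' cc
  simp

lemma leg'_one : leg' 1 = X := by
  unfold leg' cc u
  simp [derivative_X_pow]
  rw [← C_1, ← C_add, ← mul_assoc, ← map_mul]
  norm_num

lemma R3' (m : ℕ) (hm : 1 ≤ m) :
    derivative (leg' (m - 1)) = X * derivative (leg' m) - C ((m : ℝ)) * leg' m := by
  obtain ⟨n, rfl⟩ : ∃ n, m = n + 1 := ⟨m - 1, by omega⟩
  cases n with
  | zero =>
    rw [show (0 + 1 : ℕ) - 1 = 0 from rfl, leg'_zero, leg'_one]
    simp
  | succ n =>
    have := R3 n
    rw [show n + 1 + 1 - 1 = n + 1 from rfl]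
    rw [this]
    push_cast
    ring_nf

lemma KEY (m : ℕ) (hm : 1 ≤ m) :
    derivative (leg' (m + 1)) - derivative (leg' (m - 1)) = C (2 * (m : ℝ) + 1) * leg' m := by
  rw [R1 m, R3' m hm]
  simp only [map_add, map_mul, map_one, map_ofNat]
  ring

lemma DIV (a : ℝ) (i : ℕ) : ∀ m : ℕ, ∀ q : Polynomial ℝ, i ≤ m →
    ∃ r : Polynomial ℝ, derivative^[i] ((X - C a) ^ m * q) = (X - C a) ^ (m - i) * r := by
  induction i with
  | zero => exact fun m q _ => ⟨q, rfl⟩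
  | succ i ih =>
    intro m q him
    obtain ⟨n, rfl⟩ : ∃ n, m = n + 1 := ⟨m - 1, by omega⟩
    have hd : derivative ((X - C a) ^ (n + 1) * q)
        = (X - C a) ^ n * (C ((n : ℝ) + 1) * q + (X - C a) * derivative q) := by
      rw [derivative_mul, derivative_pow]
      simp only [derivative_sub, derivative_X, derivative_C, sub_zero, Nat.add_sub_cancel]
      push_cast
      ring
    rw [iter_succ', hd]
    obtain ⟨r, hr⟩ := ih n (C ((n : ℝ) + 1) * q + (X - C a) * derivative q) (by omega)
    exact ⟨r, by rw [hr, show n + 1 - (i + 1) = n - i by omega]⟩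

lemma u_pow_eq (m : ℕ) : u ^ m = (X - C (1:ℝ)) ^ m * (X - C (-1:ℝ)) ^ m := by
  rw [← mul_pow]
  congr 1
  unfold u
  simp only [map_neg, map_one]
  ring

lemma eval_iter_deriv_zero {j m : ℕ} (hj : j < m) {x : ℝ} (hx : x = 1 ∨ x = -1) :
    eval x (derivative^[j] (u ^ m)) = 0 := by
  rcases hx with rfl | rfl
  · obtain ⟨r, hr⟩ := DIV 1 j m ((X - C (-1:ℝ)) ^ m) (by omega)
    rw [← u_pow_eq] at hr
    rw [hr]
    simp [zero_pow (by omega : m - j ≠ 0)]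
  · obtain ⟨r, hr⟩ := DIV (-1) j m ((X - C (1:ℝ)) ^ m) (by omega)
    rw [mul_comm ((X - C (-1:ℝ)) ^ m), ← u_pow_eq] at hr
    rw [hr]
    simp [zero_pow (by omega : m - j ≠ 0)]

lemma eval_X_mul (m : ℕ) (x : ℝ) (hx : x = 1 ∨ x = -1) :
    eval x (derivative^[m] (X * u ^ m)) = x * eval x (derivative^[m] (u ^ m)) := by
  cases m with
  | zero => simp
  | succ n =>
    rw [LX n (u ^ (n + 1))]
    simp only [eval_add, eval_mul, eval_X, eval_C]
    rw [eval_iter_deriv_zero (j := n) (m := n + 1) (by omega) hx]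
    ring

lemma eval_iter_one (m : ℕ) : eval 1 (derivative^[m] (u ^ m)) = 2 ^ m * Nat.factorial m := by
  induction m with
  | zero => simp
  | succ m ih =>
    rw [iter_succ', L0 m, iterate_derivative_C_mul]
    rw [eval_mul, eval_C, eval_X_mul m 1 (Or.inl rfl), ih]
    rw [Nat.factorial_succ]
    push_cast
    ring

lemma eval_iter_neg_one (m : ℕ) :
    eval (-1) (derivative^[m] (u ^ m)) = (-2) ^ m * Nat.factorial m := by
  induction m with
  | zero => simp
  | succ m ih =>
    rw [iter_succ', L0 m, iterate_derivative_C_mul]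
    rw [eval_mul, eval_C, eval_X_mul m (-1) (Or.inr rfl), ih]
    rw [Nat.factorial_succ]
    push_cast
    ring

lemma eval_one_leg' (m : ℕ) : eval 1 (leg' m) = 1 := by
  rw [leg', eval_mul, eval_C, eval_iter_one, cc]
  rw [inv_mul_cancel₀ (by positivity)]

lemma eval_neg_one_leg' (m : ℕ) : eval (-1) (leg' m) = (-1) ^ m := by
  rw [leg', eval_mul, eval_C, eval_iter_neg_one, cc]
  have h2 : ((-2:ℝ)) ^ m = (-1) ^ m * 2 ^ m := by
    rw [← neg_one_mul, mul_pow]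
  rw [h2]
  have hne : ((2:ℝ) ^ m * Nat.factorial m) ≠ 0 := by positivity
  field_simp

lemma natDegree_u_pow (m : ℕ) : (u ^ m).natDegree = 2 * m := by
  have hu : u.natDegree = 2 := by
    unfold u
    rw [show (1 : Polynomial ℝ) = C 1 by simp, natDegree_X_pow_sub_C]
  have hm : (u).Monic := by
    unfold u
    rw [show (1 : Polynomial ℝ) = C 1 by simp]
    exact monic_X_pow_sub_C 1 (by norm_num)
  rw [hm.natDegree_pow, hu]
  ring

lemma natDegree_leg'_le (m : ℕ) : (leg' m).natDegree ≤ m := by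
  refine (natDegree_C_mul_le _ _).trans ?_
  refine (natDegree_iterate_derivative _ _).trans ?_
  rw [natDegree_u_pow]
  omega

lemma coeff_leg' (m : ℕ) : (leg' m).coeff m = cc m * ((2 * m).descFactorial m : ℝ) := by
  rw [leg', coeff_C_mul, coeff_iterate_derivative]
  have hu : (u).Monic := by
    unfold u
    rw [show (1 : Polynomial ℝ) = C 1 by simp]
    exact monic_X_pow_sub_C (1:ℝ) (n := 2) (by norm_num)
  have hmon : (u ^ m).Monic := hu.pow m
  have : (u ^ m).coeff (m + m) = 1 := by
    have := hmon.leadingCoeff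
    rwa [leadingCoeff, natDegree_u_pow, two_mul] at this
  rw [this, show m + m = 2 * m by ring]
  simp

lemma coeff_leg'_ne (m : ℕ) : (leg' m).coeff m ≠ 0 := by
  rw [coeff_leg']
  have h1 : (0:ℝ) < cc m := cc_pos m
  have h2 : (2 * m).descFactorial m ≠ 0 := by
    rw [Ne, Nat.descFactorial_eq_zero_iff_lt]
    omega
  have h3 : (0:ℝ) < ((2 * m).descFactorial m : ℝ) := by
    exact_mod_cast Nat.pos_of_ne_zero h2
  positivity

open intervalIntegral MeasureTheory in
lemma IBP (P Q : Polynomial ℝ) :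
    ∫ x in (-1:ℝ)..1, (derivative P).eval x * Q.eval x =
      eval 1 (P * Q) - eval (-1) (P * Q)
        - ∫ x in (-1:ℝ)..1, P.eval x * (derivative Q).eval x := by
  have h2 : ∫ x in (-1:ℝ)..1, (derivative (P * Q)).eval x
      = (P * Q).eval 1 - (P * Q).eval (-1) :=
    integral_eq_sub_of_hasDerivAt (fun x _ => (P * Q).hasDerivAt x)
      ((derivative (P * Q)).continuous.intervalIntegrable _ _)
  have h3 : ∫ x in (-1:ℝ)..1, (derivative (P * Q)).eval x
      = (∫ x in (-1:ℝ)..1, (derivative P).eval x * Q.eval x)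
        + ∫ x in (-1:ℝ)..1, P.eval x * (derivative Q).eval x := by
    rw [← integral_add (f := fun x => (derivative P).eval x * Q.eval x) (g := fun x => P.eval x * (derivative Q).eval x) (((derivative P).continuous.mul Q.continuous).intervalIntegrable _ _)
      ((P.continuous.mul (derivative Q).continuous).intervalIntegrable _ _)]
    apply integral_congr
    intro x _
    simp [derivative_mul]
  rw [h3] at h2
  linarith

lemma ORTH_aux (m : ℕ) (w : Polynomial ℝ) :
    ∀ j, j ≤ m → (∫ x in (-1:ℝ)..1, (derivative^[m] (u ^ m)).eval x * w.eval x)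
      = (-1:ℝ)^j * ∫ x in (-1:ℝ)..1,
          (derivative^[m - j] (u ^ m)).eval x * (derivative^[j] w).eval x := by
  intro j
  induction j with
  | zero => intro _; simp
  | succ j ih =>
    intro hj
    rw [ih (by omega)]
    have hD : derivative^[m - j] (u ^ m)
        = derivative (derivative^[m - (j + 1)] (u ^ m)) := by
      rw [show m - j = (m - (j + 1)) + 1 by omega, Function.iterate_succ_apply' derivative]
    rw [hD, IBP]
    rw [eval_mul, eval_mul,
      eval_iter_deriv_zero (j := m - (j+1)) (m := m) (by omega) (Or.inl rfl),
      eval_iter_deriv_zero (j := m - (j+1)) (m := m) (by omega) (Or.inr rfl),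
      ← Function.iterate_succ_apply' derivative]
    ring

lemma ORTH {m : ℕ} {w : Polynomial ℝ} (hw : w.natDegree < m) :
    ∫ x in (-1:ℝ)..1, (leg' m).eval x * w.eval x = 0 := by
  have h := ORTH_aux m w m le_rfl
  rw [Nat.sub_self, iterate_derivative_eq_zero (by omega : w.natDegree < m)] at h
  simp only [eval_zero, mul_zero, intervalIntegral.integral_zero] at h
  have : (∫ x in (-1:ℝ)..1, (leg' m).eval x * w.eval x)
      = cc m * ∫ x in (-1:ℝ)..1, (derivative^[m] (u ^ m)).eval x * w.eval x := by
    rw [← intervalIntegral.integral_const_mul]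
    apply intervalIntegral.integral_congr
    intro x _
    simp [leg']
    ring
  rw [this, h, mul_zero]

lemma FTC (k : ℕ) (hk : 1 ≤ k) (s : ℝ) :
    (∫ t in (-1:ℝ)..s, (leg' k).eval t)
      = (2 * (k:ℝ) + 1)⁻¹ * ((leg' (k+1)).eval s - (leg' (k-1)).eval s) := by
  have hne : (2 * (k:ℝ) + 1) ≠ 0 := by positivity
  set Q := C ((2 * (k:ℝ) + 1))⁻¹ * (leg' (k+1) - leg' (k-1)) with hQ
  have hd : derivative Q = leg' k := by
    rw [hQ, derivative_C_mul, derivative_sub, KEY k hk, ← mul_assoc, ← map_mul,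
      inv_mul_cancel₀ hne, map_one, one_mul]
  have hInt : ∫ t in (-1:ℝ)..s, (leg' k).eval t = Q.eval s - Q.eval (-1) := by
    rw [← hd]
    exact intervalIntegral.integral_eq_sub_of_hasDerivAt (fun x _ => Q.hasDerivAt x)
      ((derivative Q).continuous.intervalIntegrable _ _)
  have hQm1 : Q.eval (-1) = 0 := by
    rw [hQ]
    simp only [eval_mul, eval_C, eval_sub, eval_neg_one_leg']
    have h : (-1:ℝ)^(k+1) = (-1)^(k-1) := by
      rw [show k + 1 = (k - 1) + 2 by omega, pow_add]
      norm_num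
    rw [h]
    ring
  rw [hInt, hQm1, hQ]
  simp only [eval_mul, eval_C, eval_sub]
  ring

lemma BND (m : ℕ) (x : ℝ) (hx : x ∈ Set.Icc (-1:ℝ) 1) : |(leg' m).eval x| ≤ 1 := by
  cases m with
  | zero => simp [leg'_zero]
  | succ n =>
    set L := leg' (n + 1) with hL
    set M : ℝ := ((n:ℝ) + 1) * ((n:ℝ) + 2) with hM
    have hMpos : (0:ℝ) < M := by rw [hM]; positivity
    set G : Polynomial ℝ := L ^ 2 + C M⁻¹ * ((1 - X ^ 2) * (derivative L) ^ 2) with hG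
    have hODE := ODE n
    rw [show u = X ^ 2 - 1 from rfl] at hODE
    rw [← hM, ← hL] at hODE
    have hinv : (C M⁻¹ * C M : Polynomial ℝ) = 1 := by
      rw [← map_mul, inv_mul_cancel₀ hMpos.ne', map_one]
    have hdG : derivative G = C (2 * M⁻¹) * (X * (derivative L) ^ 2) := by
      rw [hG]
      simp only [derivative_add, derivative_C_mul, derivative_mul, derivative_pow,
        derivative_sub, derivative_one, derivative_X, derivative_X_pow, derivative_C,
        show (2:ℕ) - 1 = 1 from rfl, pow_one, Nat.cast_ofNat, ← hL]
      linear_combination (norm := (simp only [map_mul, map_add, map_sub, map_ofNat, map_one, Nat.cast_ofNat]; ring1)) (-2 * C M⁻¹ * derivative L) * hODE + (-2 * L * derivative L) * hinv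
    have hdiff : ∀ y : ℝ, HasDerivAt (fun t => G.eval t) ((derivative G).eval y) y :=
      fun y => G.hasDerivAt y
    have hmono : MonotoneOn (fun t => G.eval t) (Set.Icc (0:ℝ) 1) := by
      apply monotoneOn_of_deriv_nonneg (convex_Icc 0 1) G.continuous.continuousOn
      · exact fun y _ => (G.differentiableAt).differentiableWithinAt
      · intro y hy
        rw [interior_Icc] at hy
        rw [Polynomial.deriv, hdG]
        simp only [eval_mul, eval_C, eval_X, eval_pow]
        have h0 : (0:ℝ) ≤ y := le_of_lt hy.1
        have : (0:ℝ) ≤ M⁻¹ := le_of_lt (by positivity)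
        positivity
    have hanti : AntitoneOn (fun t => G.eval t) (Set.Icc (-1:ℝ) 0) := by
      apply antitoneOn_of_deriv_nonpos (convex_Icc (-1) 0) G.continuous.continuousOn
      · exact fun y _ => (G.differentiableAt).differentiableWithinAt
      · intro y hy
        rw [interior_Icc] at hy
        rw [Polynomial.deriv, hdG]
        simp only [eval_mul, eval_C, eval_X, eval_pow]
        have h0 : y ≤ 0 := le_of_lt hy.2
        have hMi : (0:ℝ) ≤ 2 * M⁻¹ := le_of_lt (by positivity)
        have hsq : (0:ℝ) ≤ ((derivative L).eval y) ^ 2 := sq_nonneg _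
        nlinarith [mul_nonneg hMi hsq]
    have hG1 : G.eval 1 = 1 := by
      rw [hG]
      simp only [eval_add, eval_mul, eval_pow, eval_sub, eval_one, eval_X, eval_C, ← hL]
      rw [hL, eval_one_leg']
      norm_num
    have hGm1 : G.eval (-1) = 1 := by
      rw [hG]
      simp only [eval_add, eval_mul, eval_pow, eval_sub, eval_one, eval_X, eval_C, ← hL]
      rw [hL, eval_neg_one_leg']
      rw [← pow_mul, mul_comm (n + 1) 2, pow_mul]
      norm_num
    have hGx : G.eval x ≤ 1 := by
      rcases le_total x 0 with h0 | h0
      · have h2 : G.eval x ≤ G.eval (-1) :=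
          hanti (Set.left_mem_Icc.mpr (by norm_num)) ⟨hx.1, h0⟩ hx.1
        rwa [hGm1] at h2
      · have h2 : G.eval x ≤ G.eval 1 :=
          hmono ⟨h0, hx.2⟩ (Set.right_mem_Icc.mpr (by norm_num)) hx.2
        rwa [hG1] at h2
    have hsq : (L.eval x) ^ 2 ≤ G.eval x := by
      have hx2 : x ^ 2 ≤ 1 := by nlinarith [hx.1, hx.2]
      have hnn : (0:ℝ) ≤ M⁻¹ * ((1 - x ^ 2) * ((derivative L).eval x) ^ 2) := by
        have h1 : (0:ℝ) ≤ M⁻¹ := le_of_lt (by positivity)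
        have h2 : (0:ℝ) ≤ 1 - x ^ 2 := by linarith
        positivity
      rw [hG]
      simp only [eval_add, eval_mul, eval_pow, eval_sub, eval_one, eval_X, eval_C]
      linarith
    have : (L.eval x) ^ 2 ≤ 1 := le_trans hsq hGx
    exact (sq_le_one_iff_abs_le_one _).mp this

end LegAux2

open LegAux2 MeasureTheory in
theorem F1_formula (k : ℕ) (hk : 1 ≤ k) (F₁ : Polynomial ℝ)
    (hF₁ : IsRadauPos k (Dinv fun t => (leg k).eval t) F₁) :
    F₁ = -(1 / (2 * k + 1) : ℝ) • (leg k + leg (k - 1)) ∧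
    F₁.eval (-1) = 0 ∧
    ∀ s ∈ Set.Icc (-1 : ℝ) 1, |F₁.eval s| ≤ 2 / (2 * k + 1) := by
  classical
  obtain ⟨hdeg, horth, hend⟩ := hF₁
  have hle : ∀ m, leg m = LegAux2.leg' m := fun _ => rfl
  have hkpos : (0:ℝ) < 2 * (k:ℝ) + 1 := by positivity
  set v : ℝ → ℝ := Dinv fun t => (leg k).eval t with hv
  have hvQ : ∀ s, v s = (2 * (k:ℝ) + 1)⁻¹ *
      ((leg' (k + 1)).eval s - (leg' (k - 1)).eval s) := fun s => LegAux2.FTC k hk s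
  have hvcont : Continuous v := by
    have : v = fun s => (2 * (k:ℝ) + 1)⁻¹ *
        ((leg' (k + 1)).eval s - (leg' (k - 1)).eval s) := funext hvQ
    rw [this]
    exact continuous_const.mul ((leg' (k + 1)).continuous.sub (leg' (k - 1)).continuous)
  set p : Polynomial ℝ := -(1 / (2 * (k:ℝ) + 1) : ℝ) • (leg' k + leg' (k - 1)) with hp
  have hpC : p = C (-(1 / (2 * (k:ℝ) + 1))) * (leg' k + leg' (k - 1)) := by
    rw [hp, Polynomial.smul_eq_C_mul]
  have hpeval : ∀ s, p.eval s
      = -(1 / (2 * (k:ℝ) + 1)) * ((leg' k).eval s + (leg' (k - 1)).eval s) := by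
    intro s
    rw [hpC]
    simp [eval_mul, eval_add]
  -- candidate orthogonality
  have hcand : ∀ w : Polynomial ℝ, w.natDegree + 1 ≤ k →
      ∫ s in (-1:ℝ)..1, (v s - p.eval s) * w.eval s = 0 := by
    intro w hw
    have h1 : ∀ s, (v s - p.eval s) * w.eval s
        = (2 * (k:ℝ) + 1)⁻¹ * ((leg' (k + 1)).eval s * w.eval s
            + (leg' k).eval s * w.eval s) := by
      intro s
      rw [hvQ s, hpeval s, one_div]
      ring
    rw [intervalIntegral.integral_congr (fun s _ => h1 s),
      intervalIntegral.integral_const_mul,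
      intervalIntegral.integral_add (f := fun s => (leg' (k + 1)).eval s * w.eval s) (g := fun s => (leg' k).eval s * w.eval s)
        (((leg' (k + 1)).continuous.mul w.continuous).intervalIntegrable _ _)
        (((leg' k).continuous.mul w.continuous).intervalIntegrable _ _),
      ORTH (show w.natDegree < k + 1 by omega), ORTH (show w.natDegree < k by omega)]
    simp
  set d : Polynomial ℝ := F₁ - p with hd
  have hd_orth : ∀ w : Polynomial ℝ, w.natDegree + 1 ≤ k →
      ∫ s in (-1:ℝ)..1, d.eval s * w.eval s = 0 := by
    intro w hw
    have hint1 : IntervalIntegrable (fun s => (v s - p.eval s) * w.eval s) volume (-1) 1 :=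
      ((hvcont.sub p.continuous).mul w.continuous).intervalIntegrable _ _
    have hint2 : IntervalIntegrable (fun s => (v s - F₁.eval s) * w.eval s) volume (-1) 1 :=
      ((hvcont.sub F₁.continuous).mul w.continuous).intervalIntegrable _ _
    have hsub := intervalIntegral.integral_sub hint1 hint2
    rw [hcand w hw, horth w hw, sub_zero] at hsub
    rw [← hsub]
    apply intervalIntegral.integral_congr
    intro s _
    simp only [hd, eval_sub]
    ring
  have hp_deg : p.natDegree ≤ k := by
    refine (natDegree_smul_le _ _).trans ?_
    refine (natDegree_add_le _ _).trans ?_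
    exact max_le (natDegree_leg'_le k) ((natDegree_leg'_le (k - 1)).trans (by omega))
  have hd_deg : d.natDegree ≤ k := (natDegree_sub_le _ _).trans (max_le hdeg hp_deg)
  have hv_end : v (-1) = 0 := intervalIntegral.integral_same
  have hp_end : p.eval (-1) = 0 := by
    rw [hpeval, eval_neg_one_leg', eval_neg_one_leg']
    have h : (-1:ℝ)^k + (-1:ℝ)^(k - 1) = 0 := by
      rw [show k = (k - 1) + 1 by omega]
      rw [show (k - 1) + 1 - 1 = k - 1 from rfl, pow_succ]
      ring
    rw [h, mul_zero]
  have hd_end : d.eval (-1) = 0 := by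
    rw [hd, eval_sub, hend, hp_end, sub_zero]
    exact hv_end
  set cq : ℝ := d.coeff k / (leg' k).coeff k with hcq
  set e : Polynomial ℝ := d - C cq * leg' k with he
  have he_k : e.coeff k = 0 := by
    rw [he, coeff_sub, coeff_C_mul, hcq, div_mul_cancel₀ _ (coeff_leg'_ne k), sub_self]
  have he_degk : e.natDegree ≤ k :=
    (natDegree_sub_le _ _).trans
      (max_le hd_deg ((natDegree_C_mul_le _ _).trans (natDegree_leg'_le k)))
  have he_deg : e.natDegree ≤ k - 1 := by
    rw [natDegree_le_iff_coeff_eq_zero]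
    intro N hN
    rcases eq_or_ne N k with rfl | hNe
    · exact he_k
    · exact coeff_eq_zero_of_natDegree_lt (lt_of_le_of_lt he_degk (by omega))
  have hee : ∫ x in (-1:ℝ)..1, e.eval x * e.eval x = 0 := by
    have h1 := hd_orth e (by omega)
    have h2 := ORTH (m := k) (w := e) (by omega)
    have heq : ∀ x, e.eval x * e.eval x
        = d.eval x * e.eval x - cq * ((leg' k).eval x * e.eval x) := by
      intro x
      rw [he]
      simp only [eval_sub, eval_mul, eval_C]
      ring
    rw [intervalIntegral.integral_congr (fun x _ => heq x),
      intervalIntegral.integral_sub (f := fun x => d.eval x * e.eval x) (g := fun x => cq * ((leg' k).eval x * e.eval x))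
        ((d.continuous.mul e.continuous).intervalIntegrable _ _)
        ((continuous_const.mul ((leg' k).continuous.mul e.continuous)).intervalIntegrable _ _),
      intervalIntegral.integral_const_mul, h1, h2, mul_zero, sub_zero]
  have he0 : e = 0 := by
    by_contra hne
    set f : ℝ → ℝ := fun x => e.eval x * e.eval x with hf
    have hnn : (0 : ℝ → ℝ) ≤ᵐ[volume.restrict (Set.uIoc (-1:ℝ) 1)] f :=
      Filter.Eventually.of_forall (fun x => mul_self_nonneg _)
    have hint : IntervalIntegrable f volume (-1) 1 :=
      (e.continuous.mul e.continuous).intervalIntegrable _ _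
    have hiff := intervalIntegral.integral_pos_iff_support_of_nonneg_ae' hnn hint
    have hsupp : Set.Ioc (-1:ℝ) 1 \ {x | IsRoot e x} ⊆
        Function.support f ∩ Set.Ioc (-1:ℝ) 1 := by
      intro x hx
      refine ⟨?_, hx.1⟩
      simp only [Function.mem_support, hf]
      intro hmul
      exact hx.2 (mul_self_eq_zero.mp hmul)
    have hroots : volume {x : ℝ | IsRoot e x} = 0 :=
      (Polynomial.finite_setOf_isRoot hne).measure_zero _
    have hIoc : volume (Set.Ioc (-1:ℝ) 1 \ {x | IsRoot e x}) = volume (Set.Ioc (-1:ℝ) 1) :=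
      measure_diff_null hroots
    have hpos : 0 < volume (Function.support f ∩ Set.Ioc (-1:ℝ) 1) := by
      refine lt_of_lt_of_le ?_ (measure_mono hsupp)
      rw [hIoc, Real.volume_Ioc]
      norm_num
    have := hiff.mpr ⟨by norm_num, hpos⟩
    rw [hee] at this
    exact lt_irrefl 0 this
  have hdC : d = C cq * leg' k := by
    have h := he0
    rw [he] at h
    exact sub_eq_zero.mp h
  have hcq0 : cq = 0 := by
    have h1 : d.eval (-1) = cq * (-1)^k := by
      rw [hdC, eval_mul, eval_C, eval_neg_one_leg']
    rw [hd_end] at h1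
    have h2 : ((-1:ℝ))^k ≠ 0 := by
      rcases Nat.even_or_odd k with he | ho
      · rw [he.neg_one_pow]; norm_num
      · rw [ho.neg_one_pow]; norm_num
    field_simp at h1
    exact (mul_eq_zero.mp h1.symm).resolve_right h2
  have hF : F₁ = p := by
    have h0 : d = 0 := by rw [hdC, hcq0, map_zero, zero_mul]
    rw [hd] at h0
    exact sub_eq_zero.mp h0
  refine ⟨?_, ?_, ?_⟩
  · rw [hF, hp]
    simp only [hle]
  · rw [hend]
    exact hv_end
  · intro s hs
    rw [hF]
    have hps : |p.eval s| ≤ 2 * (2 * (k:ℝ) + 1)⁻¹ := by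
      rw [hpeval s]
      rw [abs_mul, abs_neg, abs_of_pos (by positivity : (0:ℝ) < 1 / (2 * (k:ℝ) + 1))]
      have hA := BND k s hs
      have hB := BND (k - 1) s hs
      have habs : |(leg' k).eval s + (leg' (k - 1)).eval s| ≤ 2 := by
        calc |(leg' k).eval s + (leg' (k - 1)).eval s|
            ≤ |(leg' k).eval s| + |(leg' (k - 1)).eval s| := abs_add_le _ _
          _ ≤ 2 := by linarith
      calc (1 / (2 * (k:ℝ) + 1)) * |(leg' k).eval s + (leg' (k - 1)).eval s|
          ≤ (1 / (2 * (k:ℝ) + 1)) * 2 := by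
            apply mul_le_mul_of_nonneg_left habs (by positivity)
        _ = 2 * (2 * (k:ℝ) + 1)⁻¹ := by rw [one_div]; ring
    calc |p.eval s| ≤ 2 * (2 * (k:ℝ) + 1)⁻¹ := hps
      _ = 2 / (2 * (k:ℝ) + 1) := by rw [div_eq_mul_inv]
end

section
/- Define F_2 = P^- D^{-1} L_k, where D^{-1} v(s) = ∫_{-1}^s v and P^- is the degree-k right Gauss–Radau projection on [-1,1]. Then F_2 = (L_k - L_{k-1})/(2k+1), and consequently F_2(1) = 0 and ‖F_2‖_{L^∞([-1,1])} ≤ 2/(2k+1). -/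
open Polynomial intervalIntegral MeasureTheory

lemma usq (m : ℕ) : ((X:ℝ[X]) ^ 2 - 1) ^ m = (X - 1) ^ m * (X + 1) ^ m := by
  rw [← mul_pow]; ring_nf

lemma leg_def' (m : ℕ) : leg m =
    Polynomial.C (((2 : ℝ) ^ m * Nat.factorial m)⁻¹) *
      derivative^[m] ((X ^ 2 - 1) ^ m) := rfl

lemma iter_deriv_eval_one (m : ℕ) :
    (derivative^[m] ((X ^ 2 - 1 : ℝ[X]) ^ m)).eval 1 = (2 ^ m * Nat.factorial m : ℝ) := by
  rw [usq, iterate_derivative_mul]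
  rw [Polynomial.eval_finset_sum]
  rw [Finset.sum_eq_single 0]
  · have : (X - 1 : ℝ[X]) = X - C 1 := by simp
    simp only [Nat.choose_zero_right, one_smul, Nat.sub_zero, Function.iterate_zero_apply]
    rw [this, iterate_derivative_X_sub_pow_self]
    simp [eval_mul]
    ring
  · intro b hb hb0
    have hbm : b ≤ m := Nat.lt_succ_iff.mp (Finset.mem_range.mp hb)
    have : (X - 1 : ℝ[X]) = X - C 1 := by simp
    rw [this, iterate_derivative_X_sub_pow]
    have hmb : 0 < m - (m - b) := by omega
    simp [eval_smul, eval_pow, zero_pow (by omega : m - (m-b) ≠ 0)]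
  · intro h; simp at h

lemma leg_eval_one (m : ℕ) : (leg m).eval 1 = 1 := by
  rw [leg_def', eval_mul, eval_C, iter_deriv_eval_one]
  rw [inv_mul_cancel₀]
  positivity

lemma iter_deriv_eval_negone (m : ℕ) :
    (derivative^[m] ((X ^ 2 - 1 : ℝ[X]) ^ m)).eval (-1) = ((-2) ^ m * Nat.factorial m : ℝ) := by
  rw [usq, iterate_derivative_mul]
  rw [Polynomial.eval_finset_sum]
  rw [Finset.sum_eq_single m]
  · have : (X + 1 : ℝ[X]) = X - C (-1) := by simp [sub_neg_eq_add]
    simp only [Nat.choose_self, one_smul, Nat.sub_self, Function.iterate_zero_apply]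
    rw [this, iterate_derivative_X_sub_pow_self]
    simp only [eval_smul, eval_mul, eval_pow, eval_sub, eval_X, eval_one, eval_natCast, smul_eq_mul]
    ring
  · intro b hb hb0
    have hbm : b ≤ m := Nat.lt_succ_iff.mp (Finset.mem_range.mp hb)
    have : (X + 1 : ℝ[X]) = X - C (-1) := by simp [sub_neg_eq_add]
    rw [this, iterate_derivative_X_sub_pow]
    simp [eval_smul, eval_pow, zero_pow (by omega : m - b ≠ 0)]
  · intro h; simp at h

lemma leg_eval_negone (m : ℕ) : (leg m).eval (-1) = (-1) ^ m := by
  rw [leg_def', eval_mul, eval_C, iter_deriv_eval_negone]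
  rw [neg_pow (2:ℝ) m]
  have h2 : ((2:ℝ) ^ m * Nat.factorial m) ≠ 0 := by positivity
  field_simp

lemma usq_natDegree (m : ℕ) : ((X ^ 2 - 1 : ℝ[X]) ^ m).natDegree = 2 * m := by
  have h : ((X ^ 2 - 1 : ℝ[X])).natDegree = 2 := by
    compute_degree!
  rw [natDegree_pow, h]; ring

lemma usq_coeff (m : ℕ) : ((X ^ 2 - 1 : ℝ[X]) ^ m).coeff (2 * m) = 1 := by
  have h : ((X ^ 2 - 1 : ℝ[X]) ^ m).coeff (2*m) = ((X ^ 2 - 1 : ℝ[X]) ^ m).leadingCoeff := by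
    rw [leadingCoeff, usq_natDegree]
  rw [h, leadingCoeff_pow]
  have : (X ^ 2 - 1 : ℝ[X]).leadingCoeff = 1 := by
    have : (X ^ 2 - 1 : ℝ[X]).Monic := by monicity!
    exact this
  rw [this, one_pow]

lemma leg_coeff (m : ℕ) :
    (leg m).coeff m = ((2:ℝ) ^ m * Nat.factorial m)⁻¹ * Nat.descFactorial (2*m) m := by
  rw [leg_def', coeff_C_mul, coeff_iterate_derivative]
  have h : m + m = 2 * m := by ring
  rw [h, usq_coeff]
  simp

lemma leg_coeff_pos (m : ℕ) : 0 < (leg m).coeff m := by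
  rw [leg_coeff]
  have h1 : (0:ℝ) < ((2:ℝ) ^ m * Nat.factorial m)⁻¹ := by positivity
  have h2 : 0 < Nat.descFactorial (2*m) m := by
    have := Nat.descFactorial_eq_zero_iff_lt (n := 2*m) (k := m)
    omega
  have h2' : (0:ℝ) < (Nat.descFactorial (2*m) m : ℝ) := by exact_mod_cast h2
  positivity

lemma leg_natDegree_le (m : ℕ) : (leg m).natDegree ≤ m := by
  rw [leg_def']
  refine (natDegree_C_mul_le _ _).trans ?_
  refine (natDegree_iterate_derivative _ _).trans ?_
  rw [usq_natDegree]; omega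

lemma dvd_iterate_derivative (a : ℝ) (p : ℝ[X]) (n i : ℕ) (h : (X - C a) ^ n ∣ p) :
    (X - C a) ^ (n - i) ∣ derivative^[i] p := by
  induction i generalizing p n with
  | zero => simpa using h
  | succ i ih =>
    rcases Nat.eq_zero_or_pos n with hn | hn
    · subst hn; simpa using one_dvd _
    obtain ⟨q, rfl⟩ := h
    rw [Function.iterate_succ_apply]
    have heq : derivative ((X - C a) ^ n * q) =
        (X - C a) ^ (n-1) * (C (n:ℝ) * q + (X - C a) * derivative q) := by
      rw [derivative_mul, derivative_pow, derivative_X_sub_C]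
      have : (X - C a : ℝ[X]) ^ n = (X - C a) ^ (n-1) * (X - C a) := by
        rw [← pow_succ]; congr 1; omega
      rw [this]; ring
    rw [heq]
    have := ih ((X - C a) ^ (n-1) * (C (n:ℝ) * q + (X - C a) * derivative q)) (n-1)
      ⟨_, rfl⟩
    convert this using 2
    omega

lemma iter_deriv_usq_eval_one (m i : ℕ) (h : i < m) :
    (derivative^[i] ((X ^ 2 - 1 : ℝ[X]) ^ m)).eval 1 = 0 := by
  have hd : (X - C 1 : ℝ[X]) ^ m ∣ (X ^ 2 - 1 : ℝ[X]) ^ m := by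
    refine pow_dvd_pow_of_dvd ?_ m
    have : (X ^ 2 - 1 : ℝ[X]) = (X - C 1) * (X + C 1) := by ring_nf; simp; ring
    exact this ▸ ⟨X + C 1, rfl⟩
  obtain ⟨q, hq⟩ := dvd_iterate_derivative 1 _ m i hd
  rw [hq, eval_mul, eval_pow, eval_sub, eval_X, eval_C, sub_self,
    zero_pow (by omega : m - i ≠ 0), zero_mul]

lemma iter_deriv_usq_eval_negone (m i : ℕ) (h : i < m) :
    (derivative^[i] ((X ^ 2 - 1 : ℝ[X]) ^ m)).eval (-1) = 0 := by
  have hd : (X - C (-1) : ℝ[X]) ^ m ∣ (X ^ 2 - 1 : ℝ[X]) ^ m := by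
    refine pow_dvd_pow_of_dvd ?_ m
    have : (X ^ 2 - 1 : ℝ[X]) = (X - C (-1)) * (X - C 1) := by simp; ring
    exact this ▸ ⟨X - C 1, rfl⟩
  obtain ⟨q, hq⟩ := dvd_iterate_derivative (-1) _ m i hd
  rw [hq, eval_mul, eval_pow, eval_sub, eval_X, eval_C, sub_neg_eq_add,
    neg_add_cancel, zero_pow (by omega : m - i ≠ 0), zero_mul]

lemma poly_intervalIntegrable (p : ℝ[X]) (a b : ℝ) :
    IntervalIntegrable (fun s => p.eval s) MeasureTheory.volume a b :=
  (p.continuous.intervalIntegrable a b)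

lemma poly_integral_deriv (p : ℝ[X]) (a b : ℝ) :
    ∫ s in a..b, (derivative p).eval s = p.eval b - p.eval a := by
  have : (fun s => (derivative p).eval s) = deriv (fun x => p.eval x) := by
    funext x; exact p.deriv.symm
  rw [this]
  refine integral_deriv_eq_sub (fun x _ => p.differentiableAt) ?_
  rw [← this]
  exact poly_intervalIntegrable _ _ _

lemma poly_ibp (p q : ℝ[X]) (a b : ℝ) :
    ∫ s in a..b, (derivative p).eval s * q.eval s =
      p.eval b * q.eval b - p.eval a * q.eval a - ∫ s in a..b, p.eval s * (derivative q).eval s := by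
  have h := poly_integral_deriv (p * q) a b
  rw [derivative_mul] at h
  have hsplit : (∫ s in a..b, ((derivative p * q).eval s + (p * derivative q).eval s)) =
      (∫ s in a..b, (derivative p).eval s * q.eval s) +
      ∫ s in a..b, p.eval s * (derivative q).eval s := by
    rw [intervalIntegral.integral_add (poly_intervalIntegrable _ a b)
      (poly_intervalIntegrable _ a b)]
    simp only [eval_mul]
  simp only [eval_add] at h
  rw [hsplit] at h
  simp only [eval_mul] at h
  linarith

lemma ortho_aux (n : ℕ) (u w : ℝ[X])
    (hb : ∀ i < n, (derivative^[i] u).eval 1 = 0 ∧ (derivative^[i] u).eval (-1) = 0)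
    (hw : w.natDegree < n) :
    ∫ s in (-1:ℝ)..1, (derivative^[n] u).eval s * w.eval s = 0 := by
  induction n generalizing w with
  | zero => omega
  | succ n ih =>
    rw [Function.iterate_succ_apply']
    rw [poly_ibp (derivative^[n] u) w (-1) 1]
    have h1 := (hb n (by omega)).1
    have h2 := (hb n (by omega)).2
    rw [h1, h2]
    simp only [zero_mul, sub_zero, zero_sub, neg_eq_zero]
    by_cases hw0 : w.natDegree = 0
    · obtain ⟨c, rfl⟩ := natDegree_eq_zero.mp hw0
      simp
    · have := ih (derivative w) (fun i hi => hb i (by omega))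
        ((natDegree_derivative_lt hw0).trans_le (Nat.lt_succ_iff.mp hw))
      simpa using this

lemma leg_orthogonal (m : ℕ) (w : ℝ[X]) (hw : w.natDegree < m) :
    ∫ s in (-1:ℝ)..1, (leg m).eval s * w.eval s = 0 := by
  have := ortho_aux m ((X ^ 2 - 1 : ℝ[X]) ^ m) w
    (fun i hi => ⟨iter_deriv_usq_eval_one m i hi, iter_deriv_usq_eval_negone m i hi⟩) hw
  rw [leg_def']
  simp only [eval_mul, eval_C, mul_assoc]
  rw [intervalIntegral.integral_const_mul, this, mul_zero]

lemma sq_integral_zero (q : ℝ[X]) (h : ∫ s in (-1:ℝ)..1, q.eval s * q.eval s = 0) : q = 0 := by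
  have hnn : 0 ≤ᵐ[MeasureTheory.volume.restrict (Set.Ioc (-1:ℝ) 1 ∪ Set.Ioc 1 (-1))]
      fun s => q.eval s * q.eval s := by
    filter_upwards with x using mul_self_nonneg _
  have hint : IntervalIntegrable (fun s => q.eval s * q.eval s) MeasureTheory.volume (-1) 1 :=
    (q.continuous.mul q.continuous).intervalIntegrable _ _
  have := (intervalIntegral.integral_eq_zero_iff_of_nonneg_ae hnn hint).mp h
  have hIoc : Set.Ioc (1:ℝ) (-1) = ∅ := Set.Ioc_eq_empty (by norm_num)
  rw [hIoc, Set.union_empty] at this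
  have heq : Set.EqOn (fun s => q.eval s * q.eval s) 0 (Set.Ioc (-1:ℝ) 1) :=
    MeasureTheory.Measure.eqOn_Ioc_of_ae_eq MeasureTheory.volume this
      ((q.continuous.mul q.continuous).continuousOn) continuousOn_const
  refine q.eq_zero_of_infinite_isRoot ?_
  have hsub : Set.Ioc (-1:ℝ) 1 ⊆ {x | q.IsRoot x} := by
    intro x hx
    have := heq hx
    simp only [Pi.zero_apply] at this
    have : q.eval x = 0 := by nlinarith [this]
    exact this
  exact Set.Infinite.mono hsub (Set.Ioc_infinite (by norm_num))

lemma ortho_eq_smul_leg (m : ℕ) (p : ℝ[X]) (hdeg : p.natDegree ≤ m)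
    (hperp : ∀ w : ℝ[X], w.natDegree < m → ∫ s in (-1:ℝ)..1, p.eval s * w.eval s = 0) :
    p = (p.coeff m / (leg m).coeff m) • leg m := by
  set c := p.coeff m / (leg m).coeff m with hc
  set q := p - c • leg m with hq
  have hcoeff : q.coeff m = 0 := by
    rw [hq, coeff_sub, coeff_smul, smul_eq_mul, hc,
      div_mul_cancel₀ _ (leg_coeff_pos m).ne', sub_self]
  have hqdeg : q.natDegree ≤ m := by
    refine (natDegree_sub_le _ _).trans ?_
    simp only [sup_le_iff]
    exact ⟨hdeg, (natDegree_smul_le _ _).trans (leg_natDegree_le m)⟩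
  rcases eq_or_ne q 0 with h0 | h0
  · rw [hq, sub_eq_zero] at h0; exact h0
  exfalso
  have hqlt : q.natDegree < m := by
    rcases lt_or_eq_of_le hqdeg with h | h
    · exact h
    · exact absurd (by rw [leadingCoeff, h]; exact hcoeff) (leadingCoeff_ne_zero.mpr h0)
  have hqperp : ∫ s in (-1:ℝ)..1, q.eval s * q.eval s = 0 := by
    have hp := hperp q hqlt
    have hl := leg_orthogonal m q hqlt
    have : (fun s => q.eval s * q.eval s) =
        fun s => p.eval s * q.eval s - c * ((leg m).eval s * q.eval s) := by
      funext s
      rw [hq]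
      simp only [eval_sub, eval_smul, smul_eq_mul]
      ring
    rw [this, intervalIntegral.integral_sub
      ((show Continuous fun s => p.eval s * q.eval s from
        p.continuous.mul q.continuous).intervalIntegrable _ _)
      ((show Continuous fun s => c * ((leg m).eval s * q.eval s) from
        continuous_const.mul ((leg m).continuous.mul q.continuous)).intervalIntegrable _ _),
      intervalIntegral.integral_const_mul, hp, hl, mul_zero, sub_zero]
  exact h0 (sq_integral_zero q hqperp)

lemma leg_coeff_central (m : ℕ) : (leg m).coeff m = (Nat.centralBinom m : ℝ) / 2 ^ m := by
  rw [leg_coeff, Nat.descFactorial_eq_factorial_mul_choose]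
  rw [Nat.centralBinom]
  push_cast
  have hm : (Nat.factorial m : ℝ) ≠ 0 := by positivity
  field_simp

lemma leg_coeff_succ (k : ℕ) :
    ((k:ℝ)+1) * (leg (k+1)).coeff (k+1) = (2*k+1) * (leg k).coeff k := by
  rw [leg_coeff_central, leg_coeff_central]
  have h := Nat.succ_mul_centralBinom_succ k
  have h' : ((k+1 : ℕ) : ℝ) * (Nat.centralBinom (k+1) : ℝ)
      = ((2:ℝ) * (2*k+1)) * (Nat.centralBinom k : ℝ) := by
    exact_mod_cast congrArg (Nat.cast : ℕ → ℝ) h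
  push_cast at h' ⊢
  have h2 : (2:ℝ) ^ (k+1) = 2 * 2 ^ k := by ring
  rw [h2]
  linear_combination (1/(2*(2:ℝ)^k)) * h'

lemma deriv_leg_rec (k : ℕ) (hk : 1 ≤ k) :
    derivative (leg (k+1)) - derivative (leg (k-1)) = ((2*(k:ℝ)+1)) • leg k := by
  set p := derivative (leg (k+1)) - derivative (leg (k-1)) with hp
  have hdeg : p.natDegree ≤ k := by
    refine (natDegree_sub_le _ _).trans ?_
    simp only [sup_le_iff]
    constructor
    · exact (natDegree_derivative_le _).trans (by
        have := leg_natDegree_le (k+1); omega)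
    · exact (natDegree_derivative_le _).trans (by
        have := leg_natDegree_le (k-1); omega)
  have hperp : ∀ w : ℝ[X], w.natDegree < k →
      ∫ s in (-1:ℝ)..1, p.eval s * w.eval s = 0 := by
    intro w hw
    have hsplit : (fun s => p.eval s * w.eval s) = fun s =>
        (derivative (leg (k+1))).eval s * w.eval s
          - (derivative (leg (k-1))).eval s * w.eval s := by
      funext s; rw [hp]; simp only [eval_sub]; ring
    rw [hsplit, intervalIntegral.integral_sub
      ((show Continuous fun s => (derivative (leg (k+1))).eval s * w.eval s from
        (derivative (leg (k+1))).continuous.mul w.continuous).intervalIntegrable _ _)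
      ((show Continuous fun s => (derivative (leg (k-1))).eval s * w.eval s from
        (derivative (leg (k-1))).continuous.mul w.continuous).intervalIntegrable _ _)]
    rw [poly_ibp, poly_ibp]
    have e1 : (leg (k+1)).eval 1 = 1 := leg_eval_one _
    have e2 : (leg (k-1)).eval 1 = 1 := leg_eval_one _
    have e3 : (leg (k+1)).eval (-1) = (-1)^(k+1) := leg_eval_negone _
    have e4 : (leg (k-1)).eval (-1) = (-1)^(k-1) := leg_eval_negone _
    have epar : ((-1:ℝ))^(k+1) = ((-1:ℝ))^(k-1) := by
      have : k + 1 = (k-1) + 2 := by omega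
      rw [this, pow_add]; norm_num
    by_cases hw0 : w.natDegree = 0
    · obtain ⟨c, rfl⟩ := natDegree_eq_zero.mp hw0
      simp only [derivative_C, eval_zero, mul_zero]
      rw [intervalIntegral.integral_zero]
      rw [e1, e2, e3, e4, epar]
      ring
    · have hdw : (derivative w).natDegree < k - 1 := by
        have h1 := natDegree_derivative_lt hw0
        have : 1 ≤ w.natDegree := Nat.one_le_iff_ne_zero.mpr hw0
        omega
      rw [leg_orthogonal (k+1) (derivative w) (by omega),
        leg_orthogonal (k-1) (derivative w) hdw]
      rw [e1, e2, e3, e4, epar]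
      ring
  have := ortho_eq_smul_leg k p hdeg hperp
  have hcoeff : p.coeff k = (2*(k:ℝ)+1) * (leg k).coeff k := by
    rw [hp, coeff_sub, coeff_derivative, coeff_derivative]
    have hz : (leg (k-1)).coeff (k+1) = 0 := by
      refine coeff_eq_zero_of_natDegree_lt ?_
      have := leg_natDegree_le (k-1); omega
    rw [hz, zero_mul, sub_zero]
    have := leg_coeff_succ k
    push_cast
    nlinarith [this]
  rw [this, hcoeff]
  rw [mul_div_assoc, div_self (leg_coeff_pos k).ne', mul_one]

lemma usq_deriv_eq (m : ℕ) (hm : 1 ≤ m) :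
    (X^2 - 1 : ℝ[X]) * derivative ((X^2-1)^m) = C (2*(m:ℝ)) * X * (X^2-1)^m := by
  rw [derivative_pow]
  have hd : derivative (X^2 - 1 : ℝ[X]) = C 2 * X := by
    rw [derivative_sub, derivative_one, derivative_X_pow]
    simp
  rw [hd]
  have hpow : (X^2 - 1 : ℝ[X]) * (X^2-1)^(m-1) = (X^2-1)^m := by
    rw [← pow_succ']; congr 1; omega
  calc (X^2 - 1 : ℝ[X]) * (C (m:ℝ) * (X^2-1)^(m-1) * (C 2 * X))
      = C (m:ℝ) * (C 2 * X) * ((X^2 - 1) * (X^2-1)^(m-1)) := by ring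
    _ = C (2*(m:ℝ)) * X * (X^2-1)^m := by rw [hpow, C_mul]; ring

lemma usq_natDegree_two : (X^2 - 1 : ℝ[X]).natDegree = 2 := by compute_degree!

lemma deriv2_usq : derivative^[2] (X^2 - 1 : ℝ[X]) = C 2 := by
  have hd : derivative (X^2 - 1 : ℝ[X]) = C 2 * X := by
    rw [derivative_sub, derivative_one, derivative_X_pow]; simp
  show derivative (derivative (X^2 - 1 : ℝ[X])) = C 2
  rw [hd, derivative_mul, derivative_C, derivative_X]
  simp

lemma ode_y (n : ℕ) :
    (X^2 - 1 : ℝ[X]) * derivative (derivative (derivative^[n+1] ((X^2-1)^(n+1))))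
      + C 2 * X * derivative (derivative^[n+1] ((X^2-1)^(n+1)))
      = C (((n:ℝ)+1)*((n:ℝ)+2)) * derivative^[n+1] ((X^2-1)^(n+1)) := by
  set u : ℝ[X] := (X^2-1)^(n+1) with hu
  have h := congrArg (fun p => derivative^[n+2] p) (usq_deriv_eq (n+1) (by omega))
  rw [iterate_derivative_mul] at h
  -- RHS side expansion
  have hR : derivative^[n+2] (C (2*((n:ℝ)+1)) * X * u) =
      (n+2) • (C (2*((n:ℝ)+1)) * derivative^[n+1] u)
        + C (2*((n:ℝ)+1)) * X * derivative^[n+2] u := by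
    rw [iterate_derivative_mul]
    have hzero : ∀ j ∈ Finset.range (n+1), (n+2).choose j •
        (derivative^[n+2-j] (C (2*((n:ℝ)+1)) * X) * derivative^[j] u) = 0 := by
      intro j hj
      have hjn : j ≤ n := Nat.lt_succ_iff.mp (Finset.mem_range.mp hj)
      have hdeg : (C (2*((n:ℝ)+1)) * X).natDegree < n + 2 - j := by
        have : (C (2*((n:ℝ)+1)) * X).natDegree ≤ 1 := by compute_degree
        omega
      rw [iterate_derivative_eq_zero hdeg, zero_mul, smul_zero]
    have : Finset.range (n+2+1) = Finset.range (n+1) ∪ {n+1, n+2} := by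
      ext j; simp [Finset.mem_range, Finset.mem_union, Finset.mem_insert]; omega
    rw [Finset.sum_range_succ, Finset.sum_range_succ, Finset.sum_eq_zero hzero, zero_add]
    have h1 : n + 2 - (n+1) = 1 := by omega
    have h2 : n + 2 - (n+2) = 0 := by omega
    rw [h1, h2]
    have hdX : derivative^[1] (C (2*((n:ℝ)+1)) * X) = C (2*((n:ℝ)+1)) := by
      show derivative _ = _
      rw [derivative_mul, derivative_C, derivative_X]; simp
    have hd0 : derivative^[0] (C (2*((n:ℝ)+1)) * X) = C (2*((n:ℝ)+1)) * X :=
      rfl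
    rw [hdX, hd0]
    rw [Nat.choose_succ_self_right, Nat.choose_self, one_smul]
  push_cast at h
  rw [← hu] at h
  rw [hR] at h
  -- LHS: peel the last three terms
  rw [show (n+2).succ = n + 3 from rfl] at h
  rw [show n + 3 = (n + 2) + 1 from rfl, Finset.sum_range_succ,
    show n + 2 = (n + 1) + 1 from rfl, Finset.sum_range_succ,
    Finset.sum_range_succ] at h
  have hz : ∀ j ∈ Finset.range n, (n+1+1).choose j •
      (derivative^[n+1+1-j] (X^2 - 1 : ℝ[X]) * derivative^[j] (derivative u)) = 0 := by
    intro j hj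
    have hjn : j < n := Finset.mem_range.mp hj
    have : (X^2 - 1 : ℝ[X]).natDegree < n+1+1-j := by rw [usq_natDegree_two]; omega
    rw [iterate_derivative_eq_zero this, zero_mul, smul_zero]
  rw [Finset.sum_eq_zero hz, zero_add] at h
  rw [show n+1+1-n = 2 from by omega, show n+1+1-(n+1) = 1 from by omega,
    show n+1+1-(n+1+1) = 0 from by omega] at h
  have hd1 : derivative^[1] (X^2 - 1 : ℝ[X]) = C 2 * X := by
    show derivative _ = _
    rw [derivative_sub, derivative_one, derivative_X_pow]; simp
  rw [deriv2_usq, hd1, Function.iterate_zero_apply] at h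
  have hit : ∀ j : ℕ, derivative^[j] (derivative u) = derivative^[j+1] u := by
    intro j; rw [Function.iterate_succ_apply]
  rw [hit n, hit (n+1), hit (n+1+1)] at h
  simp only [Nat.choose_self, Nat.choose_succ_self_right, one_smul] at h
  have e1 : derivative^[n+1+1] u = derivative (derivative^[n+1] u) :=
    Function.iterate_succ_apply' _ _ _
  have e2 : derivative^[n+1+1+1] u = derivative (derivative (derivative^[n+1] u)) := by
    rw [Function.iterate_succ_apply', e1]
  rw [show n+2 = n+1+1 from rfl] at h
  rw [e1, e2] at h
  -- choose identity
  have h1 : (n+2).choose n = (n+2).choose 2 := by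
    have := Nat.choose_symm (n := n+2) (k := 2) (by omega)
    simpa [show n+2-2 = n from by omega] using this
  have heven : 2 ∣ (n+2)*(n+1) := by
    have he := Nat.even_mul_succ_self (n+1)
    rw [show (n+1) * (n+1+1) = (n+2)*(n+1) from by ring] at he
    exact he.two_dvd
  have h2 : 2 * ((n+2).choose 2) = (n+2)*(n+1) := by
    rw [Nat.choose_two_right, show n+2-1 = n+1 from rfl]
    exact Nat.mul_div_cancel' heven
  have h3 : 2 * ((n+2).choose n) = (n+2)*(n+1) := by rw [h1]; exact h2
  have hch : (((n+1+1).choose n : ℝ)) * 2 = ((n:ℝ)+1)*((n:ℝ)+2) := by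
    rw [show n+1+1 = n+2 from rfl]
    have := congrArg (Nat.cast : ℕ → ℝ) h3
    push_cast at this
    linarith
  refine Polynomial.funext fun x => ?_
  have hx := congrArg (eval x) h
  simp only [eval_add, eval_mul, eval_smul, eval_C, eval_X, eval_pow, eval_sub, eval_one,
    smul_eq_mul, nsmul_eq_mul, Polynomial.eval_natCast, eval_ofNat] at hx ⊢
  push_cast at hx ⊢
  linear_combination hx - (eval x (derivative^[n+1] u)) * hch

lemma ode_leg (m : ℕ) (hm : 1 ≤ m) :
    (X^2 - 1 : ℝ[X]) * derivative (derivative (leg m)) + C 2 * X * derivative (leg m)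
      = C ((m:ℝ)*((m:ℝ)+1)) * leg m := by
  obtain ⟨n, rfl⟩ := Nat.exists_eq_add_of_le hm
  rw [show 1 + n = n + 1 from by omega]
  rw [leg_def']
  rw [derivative_C_mul, derivative_C_mul]
  have := ode_y n
  push_cast
  calc (X^2 - 1 : ℝ[X]) * (C _ * derivative (derivative (derivative^[n+1] ((X^2-1)^(n+1)))))
        + C 2 * X * (C _ * derivative (derivative^[n+1] ((X^2-1)^(n+1))))
      = C (((2:ℝ) ^ (n+1) * Nat.factorial (n+1))⁻¹) *
        ((X^2 - 1) * derivative (derivative (derivative^[n+1] ((X^2-1)^(n+1))))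
          + C 2 * X * derivative (derivative^[n+1] ((X^2-1)^(n+1)))) := by ring
    _ = C (((2:ℝ) ^ (n+1) * Nat.factorial (n+1))⁻¹) *
        (C (((n:ℝ)+1)*((n:ℝ)+2)) * derivative^[n+1] ((X^2-1)^(n+1))) := by rw [this]
    _ = C (((n:ℝ)+1)*((n:ℝ)+1+1)) *
        (C (((2:ℝ) ^ (n+1) * Nat.factorial (n+1))⁻¹) * derivative^[n+1] ((X^2-1)^(n+1))) := by
        ring_nf

lemma dGp (m : ℕ) (hm : 1 ≤ m) :
    derivative (C ((m:ℝ)*((m:ℝ)+1)) * (leg m)^2 + (1 - X^2) * (derivative (leg m))^2)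
      = C 2 * X * (derivative (leg m))^2 := by
  have hode := ode_leg m hm
  rw [derivative_add, derivative_mul, derivative_C, derivative_mul, derivative_pow,
    derivative_pow, derivative_sub, derivative_one, derivative_X_pow]
  simp only [zero_mul, zero_add, zero_sub]
  have hC2 : (C 2 : ℝ[X]) = 2 := by
    rw [show ((2:ℝ)) = ((2:ℕ):ℝ) from by norm_num, C_eq_natCast]
    norm_num
  push_cast
  simp only [hC2] at hode ⊢
  linear_combination (-2 * derivative (leg m)) * hode

lemma leg_abs_le_one (m : ℕ) : ∀ x ∈ Set.Icc (-1:ℝ) 1, |(leg m).eval x| ≤ 1 := by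
  rcases Nat.eq_zero_or_pos m with hm | hm
  · subst hm
    intro x hx
    have : leg 0 = 1 := by
      rw [leg_def']
      simp
    rw [this]; simp
  intro x hx
  set N : ℝ := (m:ℝ)*((m:ℝ)+1) with hN
  have hNpos : 0 < N := by
    have : (1:ℝ) ≤ (m:ℝ) := by exact_mod_cast hm
    nlinarith
  set Gp : ℝ[X] := C N * (leg m)^2 + (1 - X^2) * (derivative (leg m))^2 with hGp
  have hdG : derivative Gp = C 2 * X * (derivative (leg m))^2 := dGp m hm
  have hcont : Continuous fun x => Gp.eval x := Gp.continuous
  have hderiv : ∀ x : ℝ, HasDerivAt (fun x => Gp.eval x)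
      (2 * x * ((derivative (leg m)).eval x)^2) x := by
    intro x
    have := Gp.hasDerivAt x
    rw [hdG] at this
    simpa using this
  have hG1 : Gp.eval 1 = N := by
    rw [hGp]
    simp [leg_eval_one]
  have hGneg1 : Gp.eval (-1) = N := by
    have hsq1 : ((-1:ℝ)^m)^2 = 1 := by
      rw [← pow_mul, mul_comm m 2, pow_mul]
      norm_num
    rw [hGp]
    simp only [eval_add, eval_mul, eval_C, eval_pow, eval_sub, eval_one, eval_X, leg_eval_negone]
    rw [hsq1]
    norm_num
  have hGle : Gp.eval x ≤ N := by
    rcases le_or_gt 0 x with hx0 | hx0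
    · have hmono : MonotoneOn (fun x => Gp.eval x) (Set.Icc 0 1) := by
        refine monotoneOn_of_deriv_nonneg (convex_Icc 0 1) hcont.continuousOn
          (fun y hy => (Gp.differentiableAt).differentiableWithinAt) ?_
        intro y hy
        rw [(hderiv y).deriv]
        have : 0 ≤ y := le_of_lt (by
          rw [interior_Icc] at hy; exact hy.1)
        positivity
      have := hmono (Set.mem_Icc.mpr ⟨hx0, hx.2⟩) (Set.mem_Icc.mpr ⟨zero_le_one, le_refl 1⟩) hx.2
      calc Gp.eval x ≤ Gp.eval 1 := this
        _ = N := hG1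
    · have hanti : AntitoneOn (fun x => Gp.eval x) (Set.Icc (-1) 0) := by
        refine antitoneOn_of_deriv_nonpos (convex_Icc (-1) 0) hcont.continuousOn
          (fun y hy => (Gp.differentiableAt).differentiableWithinAt) ?_
        intro y hy
        rw [(hderiv y).deriv]
        rw [interior_Icc] at hy
        have hy0 : y ≤ 0 := le_of_lt hy.2
        nlinarith [sq_nonneg ((derivative (leg m)).eval y)]
      have := hanti (Set.mem_Icc.mpr ⟨le_refl (-1:ℝ), by norm_num⟩)
        (Set.mem_Icc.mpr ⟨hx.1, le_of_lt hx0⟩) hx.1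
      calc Gp.eval x ≤ Gp.eval (-1) := this
        _ = N := hGneg1
  have hsq : ((leg m).eval x)^2 ≤ 1 := by
    have hterm : 0 ≤ (1 - x^2) * ((derivative (leg m)).eval x)^2 := by
      have h1 : x^2 ≤ 1 := by nlinarith [hx.1, hx.2]
      nlinarith [sq_nonneg ((derivative (leg m)).eval x)]
    have hGx : Gp.eval x = N * ((leg m).eval x)^2 + (1 - x^2) * ((derivative (leg m)).eval x)^2 := by
      rw [hGp]; simp
    nlinarith [hGle, hGx]
  exact (sq_le_one_iff_abs_le_one _).mp hsq

/-- Degree-`k` right Gauss–Radau projection on `[-1,1]`. -/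
def IsRadauNeg (k : ℕ) (v : ℝ → ℝ) (p : Polynomial ℝ) : Prop :=
  p.natDegree ≤ k ∧
  (∀ w : Polynomial ℝ, w.natDegree + 1 ≤ k →
    ∫ s in (-1 : ℝ)..1, (v s - p.eval s) * w.eval s = 0) ∧
  p.eval 1 = v 1

lemma Dinv_leg (k : ℕ) (hk : 1 ≤ k) (s : ℝ) :
    Dinv (fun t => (leg k).eval t) s
      = ((leg (k+1)).eval s - (leg (k-1)).eval s) / (2*(k:ℝ)+1) := by
  have hder : derivative (leg (k+1) - leg (k-1)) = (2*(k:ℝ)+1) • leg k := by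
    rw [derivative_sub]; exact deriv_leg_rec k hk
  have hint := poly_integral_deriv (leg (k+1) - leg (k-1)) (-1) s
  rw [hder] at hint
  have hL : (∫ t in (-1:ℝ)..s, ((2*(k:ℝ)+1) • leg k).eval t)
      = (2*(k:ℝ)+1) * ∫ t in (-1:ℝ)..s, (leg k).eval t := by
    simp only [eval_smul, smul_eq_mul]
    rw [intervalIntegral.integral_const_mul]
  rw [hL] at hint
  have hneg : (leg (k+1) - leg (k-1)).eval (-1) = 0 := by
    rw [eval_sub, leg_eval_negone, leg_eval_negone]
    have : k + 1 = (k-1) + 2 := by omega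
    rw [this, pow_add]
    norm_num
  rw [hneg, sub_zero] at hint
  have hpos : (2*(k:ℝ)+1) ≠ 0 := by positivity
  rw [Dinv]
  rw [eval_sub] at hint
  field_simp
  linarith [hint]

theorem F2_formula (k : ℕ) (hk : 1 ≤ k) (F₂ : Polynomial ℝ)
    (hF₂ : IsRadauNeg k (Dinv fun t => (leg k).eval t) F₂) :
    F₂ = (1 / (2 * k + 1) : ℝ) • (leg k - leg (k - 1)) ∧
    F₂.eval 1 = 0 ∧
    ∀ s ∈ Set.Icc (-1 : ℝ) 1, |F₂.eval s| ≤ 2 / (2 * k + 1) := by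
  obtain ⟨hFdeg, hFperp, hF1⟩ := hF₂
  set a : ℝ := 1/(2*(k:ℝ)+1) with ha
  have hapos : 0 < a := by rw [ha]; positivity
  set Q : ℝ[X] := (1 / (2 * (k:ℝ) + 1) : ℝ) • (leg k - leg (k - 1)) with hQ
  set vP : ℝ[X] := C a * (leg (k+1) - leg (k-1)) with hvP
  have hv : ∀ s, Dinv (fun t => (leg k).eval t) s = vP.eval s := by
    intro s
    rw [Dinv_leg k hk s, hvP]
    simp only [eval_mul, eval_C, eval_sub, ha]
    field_simp
  have hQv : vP - Q = C a * (leg (k+1) - leg k) := by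
    rw [hvP, hQ, smul_eq_C_mul, ha]
    ring
  have hperp : ∀ w : ℝ[X], w.natDegree < k →
      ∫ s in (-1:ℝ)..1, (F₂ - Q).eval s * w.eval s = 0 := by
    intro w hw
    have hA := hFperp w (by omega)
    have hA' : ∫ s in (-1:ℝ)..1, (vP - F₂).eval s * w.eval s = 0 := by
      rw [← hA]
      apply intervalIntegral.integral_congr
      intro s _
      simp only [eval_sub, hv s]
    have hB : ∫ s in (-1:ℝ)..1, (vP - Q).eval s * w.eval s = 0 := by
      have hcongr : Set.EqOn (fun s => (vP - Q).eval s * w.eval s)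
          (fun s => a * ((leg (k+1)).eval s * w.eval s - (leg k).eval s * w.eval s))
          (Set.uIcc (-1:ℝ) 1) := by
        intro s _
        rw [hQv]
        simp only [eval_mul, eval_C, eval_sub]
        ring
      rw [intervalIntegral.integral_congr hcongr, intervalIntegral.integral_const_mul,
        intervalIntegral.integral_sub
          ((show Continuous fun s => (leg (k+1)).eval s * w.eval s from
            (leg (k+1)).continuous.mul w.continuous).intervalIntegrable _ _)
          ((show Continuous fun s => (leg k).eval s * w.eval s from
            (leg k).continuous.mul w.continuous).intervalIntegrable _ _),
        leg_orthogonal (k+1) w (by omega), leg_orthogonal k w hw]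
      ring
    have hcongr2 : Set.EqOn (fun s => (F₂ - Q).eval s * w.eval s)
        (fun s => (vP - Q).eval s * w.eval s - (vP - F₂).eval s * w.eval s)
        (Set.uIcc (-1:ℝ) 1) := by
      intro s _
      simp only [eval_sub]
      ring
    rw [intervalIntegral.integral_congr hcongr2,
      intervalIntegral.integral_sub
        ((show Continuous fun s => (vP - Q).eval s * w.eval s from
          (vP - Q).continuous.mul w.continuous).intervalIntegrable _ _)
        ((show Continuous fun s => (vP - F₂).eval s * w.eval s from
          (vP - F₂).continuous.mul w.continuous).intervalIntegrable _ _),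
      hB, hA', sub_zero]
  have hdeg : (F₂ - Q).natDegree ≤ k := by
    refine (natDegree_sub_le _ _).trans ?_
    simp only [sup_le_iff]
    refine ⟨hFdeg, ?_⟩
    rw [hQ]
    refine (natDegree_smul_le _ _).trans ?_
    refine (natDegree_sub_le _ _).trans ?_
    simp only [sup_le_iff]
    exact ⟨leg_natDegree_le k, (leg_natDegree_le (k-1)).trans (by omega)⟩
  have heq := ortho_eq_smul_leg k (F₂ - Q) hdeg hperp
  have hv1 : Dinv (fun t => (leg k).eval t) 1 = 0 := by
    rw [hv 1, hvP]
    simp [leg_eval_one]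
  have hQ1 : Q.eval 1 = 0 := by
    rw [hQ]
    simp [leg_eval_one]
  have hdiff1 : (F₂ - Q).eval 1 = 0 := by
    rw [eval_sub, hF1, hv1, hQ1, sub_zero]
  have hc : (F₂ - Q).coeff k / (leg k).coeff k = 0 := by
    have h := congrArg (eval 1) heq
    rw [hdiff1, eval_smul, leg_eval_one, smul_eq_mul, mul_one] at h
    exact h.symm
  have hF2Q : F₂ = Q := by
    rw [hc, zero_smul] at heq
    exact sub_eq_zero.mp heq
  refine ⟨hF2Q, by rw [hF2Q]; exact hQ1, ?_⟩
  intro s hs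
  rw [hF2Q, hQ, eval_smul, smul_eq_mul, abs_mul]
  have h1 := leg_abs_le_one k s hs
  have h2 := leg_abs_le_one (k-1) s hs
  have habs : |(leg k - leg (k-1)).eval s| ≤ 2 := by
    rw [eval_sub]
    calc |(leg k).eval s - (leg (k-1)).eval s| ≤ |(leg k).eval s| + |(leg (k-1)).eval s| :=
          abs_sub _ _
      _ ≤ 2 := by linarith
  have haval : |(1 / (2 * (k:ℝ) + 1) : ℝ)| = 1 / (2 * (k:ℝ) + 1) := abs_of_pos (by positivity)
  rw [haval]
  rw [show (2 : ℝ) / (2 * (k:ℝ) + 1) = (1 / (2 * (k:ℝ) + 1)) * 2 from by ring]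
  exact mul_le_mul_of_nonneg_left habs (by positivity)
end

section
/- Let F and \bar F be polynomials of degree ≤ k on [-1,1] with \bar F = P^- D^{-1} F, and suppose D^{-1}F vanishes at both endpoints s = ±1. Then for every polynomial v of degree ≤ k, ∫_{-1}^1 \bar F v' ds + ∫_{-1}^1 F v ds = 0. -/
open Polynomial

/-- Key cancellation: if `F̄ = P⁻D⁻¹F` and `D⁻¹F` vanishes at both endpoints, then
`∫ F̄ v' + ∫ F v = 0` for every polynomial `v` of degree ≤ k. -/
theorem cancellation_mechanism (k : ℕ) (F barF : Polynomial ℝ)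
    (hFdeg : F.natDegree ≤ k) (hbarFdeg : barF.natDegree ≤ k)
    (hproj : IsRadauNeg k (Dinv fun t => F.eval t) barF)
    (hleft : Dinv (fun t => F.eval t) (-1) = 0)
    (hright : Dinv (fun t => F.eval t) 1 = 0)
    (v : Polynomial ℝ) (hv : v.natDegree ≤ k) :
    (∫ s in (-1 : ℝ)..1, barF.eval s * (Polynomial.derivative v).eval s) +
      ∫ s in (-1 : ℝ)..1, F.eval s * v.eval s = 0 := by
  obtain ⟨hdeg, horth, hend⟩ := hproj
  set G : ℝ → ℝ := Dinv fun t => F.eval t with hG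
  have hFc : Continuous fun t : ℝ => F.eval t := F.continuous_aeval
  have hGc : Continuous G := by
    exact intervalIntegral.continuous_primitive (fun a b => hFc.intervalIntegrable a b) (-1)
  have hGderiv : ∀ x ∈ Set.uIcc (-1 : ℝ) 1, HasDerivAt G (F.eval x) x := by
    intro x _
    exact intervalIntegral.integral_hasDerivAt_right (hFc.intervalIntegrable _ _)
      (hFc.stronglyMeasurableAtFilter _ _) hFc.continuousAt
  have hvderiv : ∀ x ∈ Set.uIcc (-1 : ℝ) 1,
      HasDerivAt (fun s => v.eval s) ((derivative v).eval x) x :=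
    fun x _ => v.hasDerivAt x
  have hparts : (∫ s in (-1 : ℝ)..1, G s * (derivative v).eval s)
      = G 1 * v.eval 1 - G (-1) * v.eval (-1) - ∫ s in (-1 : ℝ)..1, F.eval s * v.eval s :=
    intervalIntegral.integral_mul_deriv_eq_deriv_mul hGderiv hvderiv
      (hFc.intervalIntegrable _ _) (((derivative v).continuous_aeval).intervalIntegrable _ _)
  have key : (∫ s in (-1 : ℝ)..1, (G s - barF.eval s) * (derivative v).eval s) = 0 := by
    by_cases hd : derivative v = 0
    · simp [hd]
    · apply horth
      have h0 : v.natDegree ≠ 0 := by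
        intro h
        obtain ⟨c, rfl⟩ := Polynomial.natDegree_eq_zero.mp h
        simp at hd
      have := Polynomial.natDegree_derivative_lt h0
      omega
  have hInt1 : IntervalIntegrable (fun s => G s * (derivative v).eval s)
      MeasureTheory.volume (-1 : ℝ) 1 :=
    (hGc.mul ((derivative v).continuous_aeval)).intervalIntegrable _ _
  have hInt2 : IntervalIntegrable (fun s => barF.eval s * (derivative v).eval s)
      MeasureTheory.volume (-1 : ℝ) 1 :=
    (barF.continuous_aeval.mul ((derivative v).continuous_aeval)).intervalIntegrable _ _
  have hsub : (∫ s in (-1 : ℝ)..1, G s * (derivative v).eval s)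
      - (∫ s in (-1 : ℝ)..1, barF.eval s * (derivative v).eval s) = 0 := by
    rw [← intervalIntegral.integral_sub hInt1 hInt2]
    simpa [sub_mul] using key
  have h1 : G 1 = 0 := hright
  have h2 : G (-1) = 0 := hleft
  rw [h1, h2] at hparts
  linarith
end
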